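/- arXiv:1807.00538 — 2 statements merged into one kernel-verified Lean document; each statement's English description precedes it below -/
import Mathlib

section
/- For the Coulomb potential in $\mathbb{R}^3$, the Fefferman–de la Llave formula holds: $\frac{1}{|x|} = \frac{1}{\pi}\int_0^\infty \frac{1}{r^5}(\mathbf{1}_{B_r}*\mathbf{1}_{B_r})(x)\,dr$ for all $x\in\mathbb{R}^3\setminus\{0\}$, where $\mathbf{1}_{B_r}$ is the indicator function of the ball of radius $r$ centered at the origin. -/
open MeasureTheory Filter Set Real

noncomputable abbrev E3 := EuclideanSpace ℝ (Fin 3)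

theorem inner_int (x : E3) (r : ℝ) :
    (∫ y, (Metric.ball (0 : E3) r).indicator (fun _ => (1:ℝ)) (x - y) *
           (Metric.ball (0 : E3) r).indicator (fun _ => (1:ℝ)) y)
    = (volume (Metric.ball x r ∩ Metric.ball (0:E3) r)).toReal := by
  have h : ∀ y : E3, (Metric.ball (0 : E3) r).indicator (fun _ => (1:ℝ)) (x - y) *
           (Metric.ball (0 : E3) r).indicator (fun _ => (1:ℝ)) y
      = (Metric.ball x r ∩ Metric.ball (0:E3) r).indicator (fun _ => (1:ℝ)) y := by
    intro y
    have h1 : (x - y ∈ Metric.ball (0:E3) r) ↔ y ∈ Metric.ball x r := by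
      simp [mem_ball_iff_norm, dist_eq_norm, norm_sub_rev]
    by_cases hy1 : y ∈ Metric.ball x r <;> by_cases hy2 : y ∈ Metric.ball (0:E3) r <;>
      simp [Set.indicator_apply, h1, hy1, hy2]
  simp_rw [h]
  exact integral_indicator_one (measurableSet_ball.inter measurableSet_ball)

theorem rot (x : E3) (hx : x ≠ 0) (r : ℝ) :
    volume (Metric.ball x r ∩ Metric.ball (0:E3) r)
    = volume (Metric.ball (‖x‖ • EuclideanSpace.single (0 : Fin 3) (1:ℝ)) r ∩ Metric.ball (0:E3) r) := by
  set d := ‖x‖ with hd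
  have hd0 : d ≠ 0 := norm_ne_zero_iff.mpr hx
  have hcard : Module.finrank ℝ E3 = Fintype.card (Fin 3) := by simp
  have horth : Orthonormal ℝ (({0} : Set (Fin 3)).restrict (fun _ => d⁻¹ • x)) := by
    constructor
    · intro i
      show ‖d⁻¹ • x‖ = 1
      simp only [norm_smul, Real.norm_eq_abs, abs_inv,
        abs_of_nonneg (norm_nonneg x), ← hd, abs_of_nonneg (hd ▸ norm_nonneg x : 0 ≤ d)]
      field_simp
    · intro i j hij
      exact absurd (Subsingleton.elim i j) hij
  obtain ⟨b, hb⟩ := horth.exists_orthonormalBasis_extension_of_card_eq hcard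
  have hb0 : b 0 = d⁻¹ • x := hb 0 rfl
  have hrx : b.repr x = d • EuclideanSpace.single (0 : Fin 3) (1:ℝ) := by
    have : x = d • b 0 := by rw [hb0, smul_smul, mul_inv_cancel₀ hd0, one_smul]
    rw [this, _root_.map_smul, b.repr_self]
  have hdist0 : ∀ y : E3, dist (b.repr y) (0 : EuclideanSpace ℝ (Fin 3)) = dist y 0 := fun y => by
    rw [dist_zero_right, dist_zero_right, b.repr.norm_map]
  have key : Metric.ball x r ∩ Metric.ball (0:E3) r
      = b.repr ⁻¹' (Metric.ball (d • EuclideanSpace.single (0 : Fin 3) (1:ℝ)) r ∩ Metric.ball (0:E3) r) := by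
    ext y
    simp only [Set.mem_inter_iff, Set.mem_preimage, Metric.mem_ball]
    rw [← hrx, b.repr.dist_map, hdist0]
  rw [key]
  exact b.measurePreserving_repr.measure_preimage
    ((measurableSet_ball.inter measurableSet_ball)).nullMeasurableSet

theorem integrable_g (d r : ℝ) (hr : 0 < r) :
    Integrable (fun t : ℝ => max 0 (r^2 - max ((t-d)^2) (t^2))) := by
  have hcont : Continuous (fun t : ℝ => max 0 (r^2 - max ((t-d)^2) (t^2))) := by
    apply continuous_const.max
    exact continuous_const.sub (((continuous_id.sub continuous_const).pow 2).max (continuous_id.pow 2))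
  apply hcont.integrable_of_hasCompactSupport
  apply HasCompactSupport.intro (isCompact_Icc (a := d - r) (b := r))
  intro t ht
  simp only [Set.mem_Icc, not_and_or, not_le] at ht
  have : r^2 - max ((t-d)^2) (t^2) ≤ 0 := by
    rcases ht with h | h
    · have : r^2 ≤ (t-d)^2 := by nlinarith [sq_nonneg (t-d+r)]
      have := le_max_left ((t-d)^2) (t^2); linarith
    · have : r^2 ≤ t^2 := by nlinarith [sq_nonneg (t-r)]
      have := le_max_right ((t-d)^2) (t^2); linarith
  exact max_eq_left this

theorem oneD (d r : ℝ) (hd : 0 < d) (hdr : d < 2*r) :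
    ∫ t : ℝ, max 0 (r^2 - max ((t-d)^2) (t^2)) = 4*r^3/3 - r^2*d + d^3/12 := by
  have hr : 0 < r := by linarith
  have hint := integrable_g d r hr
  rw [← intervalIntegral.integral_Iic_add_Ioi (b := d/2) hint.integrableOn hint.integrableOn]
  have h1 : ∫ t in Iic (d/2), max 0 (r^2 - max ((t-d)^2) (t^2))
      = ∫ t in (d-r)..(d/2), (r^2 - (t-d)^2) := by
    have e1 : ∀ t ∈ Iic (d/2), max 0 (r^2 - max ((t-d)^2) (t^2))
        = (Ioi (d-r)).indicator (fun t => r^2 - (t-d)^2) t := by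
      intro t ht
      simp only [Set.mem_Iic] at ht
      have hmax : max ((t-d)^2) (t^2) = (t-d)^2 := max_eq_left (by nlinarith)
      rw [hmax]
      by_cases h : t ∈ Ioi (d-r)
      · simp only [Set.mem_Ioi] at h
        rw [Set.indicator_of_mem (by exact h)]
        exact max_eq_right (by nlinarith)
      · simp only [Set.mem_Ioi, not_lt] at h
        rw [Set.indicator_of_notMem (by simpa using h)]
        exact max_eq_left (by nlinarith)
    rw [setIntegral_congr_fun measurableSet_Iic e1, setIntegral_indicator measurableSet_Ioi,
      Set.Iic_inter_Ioi, ← intervalIntegral.integral_of_le (by linarith)]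
  have h2 : ∫ t in Ioi (d/2), max 0 (r^2 - max ((t-d)^2) (t^2))
      = ∫ t in (d/2)..r, (r^2 - t^2) := by
    have e1 : ∀ t ∈ Ioi (d/2), max 0 (r^2 - max ((t-d)^2) (t^2))
        = (Iio r).indicator (fun t => r^2 - t^2) t := by
      intro t ht
      simp only [Set.mem_Ioi] at ht
      have hmax : max ((t-d)^2) (t^2) = t^2 := max_eq_right (by nlinarith)
      rw [hmax]
      by_cases h : t ∈ Iio r
      · simp only [Set.mem_Iio] at h
        rw [Set.indicator_of_mem (by exact h)]
        exact max_eq_right (by nlinarith)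
      · simp only [Set.mem_Iio, not_lt] at h
        rw [Set.indicator_of_notMem (by simpa using h)]
        exact max_eq_left (by nlinarith)
    rw [setIntegral_congr_fun measurableSet_Ioi e1, setIntegral_indicator measurableSet_Iio,
      Set.Ioi_inter_Iio, intervalIntegral.integral_of_le (by linarith),
      integral_Ioc_eq_integral_Ioo]
  rw [h1, h2]
  have i1 : IntervalIntegrable (fun t : ℝ => (t-d)^2) volume (d-r) (d/2) :=
    (((continuous_id.sub continuous_const).pow 2)).intervalIntegrable _ _
  have i2 : IntervalIntegrable (fun t : ℝ => t^2) volume (d/2) r :=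
    ((continuous_id.pow 2)).intervalIntegrable _ _
  rw [intervalIntegral.integral_sub (intervalIntegrable_const) i1,
    intervalIntegral.integral_sub (intervalIntegrable_const) i2,
    intervalIntegral.integral_const, intervalIntegral.integral_const,
    intervalIntegral.integral_comp_sub_right (fun t : ℝ => t^2) d,
    integral_pow, integral_pow]
  push_cast
  simp only [smul_eq_mul]
  ring

theorem slice_vol (c : ℝ) :
    (volume : Measure (Fin 2 → ℝ)) {p : Fin 2 → ℝ | (p 0)^2 + (p 1)^2 < c}
      = ENNReal.ofReal (π * max 0 c) := by
  have hS : MeasurableSet {p : Fin 2 → ℝ | (p 0)^2 + (p 1)^2 < c} := by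
    apply measurableSet_lt _ measurable_const
    exact ((measurable_pi_apply 0).pow_const 2).add ((measurable_pi_apply 1).pow_const 2)
  rw [← (EuclideanSpace.volume_preserving_symm_measurableEquiv_toLp (Fin 2)).measure_preimage
    hS.nullMeasurableSet]
  have key : ((MeasurableEquiv.toLp 2 (Fin 2 → ℝ)).symm) ⁻¹' {p : Fin 2 → ℝ | (p 0)^2 + (p 1)^2 < c}
      = Metric.ball (0 : EuclideanSpace ℝ (Fin 2)) (Real.sqrt (max 0 c)) := by
    ext z
    have hc : ∀ i : Fin 2, (((MeasurableEquiv.toLp 2 (Fin 2 → ℝ)).symm) z) i = z i := fun _ => rfl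
    simp only [Set.mem_preimage, Set.mem_setOf_eq, Metric.mem_ball, hc]
    rw [EuclideanSpace.dist_eq]
    have h1 : ∑ i, dist (z i) ((0 : EuclideanSpace ℝ (Fin 2)) i) ^ 2 = (z 0)^2 + (z 1)^2 := by
      simp [Fin.sum_univ_two, Real.dist_eq, sq_abs]
    have hnn : (0:ℝ) ≤ (z 0)^2 + (z 1)^2 := by positivity
    rw [h1, Real.sqrt_lt_sqrt_iff hnn, lt_max_iff]
    constructor
    · exact fun h => Or.inr h
    · rintro (h | h)
      · linarith
      · exact h
  rw [key, EuclideanSpace.volume_ball]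
  have : Fintype.card (Fin 2) = 2 := by simp
  rw [this]
  have hg : Real.Gamma ((2:ℕ) / 2 + 1) = 1 := by norm_num
  rw [hg, div_one, Real.sq_sqrt Real.pi_nonneg, ← ENNReal.ofReal_pow (Real.sqrt_nonneg _),
    Real.sq_sqrt (le_max_left 0 c), ← ENNReal.ofReal_mul (le_max_left 0 c), mul_comm]


theorem dist_lt {r : ℝ} (hr : 0 < r) (z w : E3) :
    dist z w < r ↔ (z 0 - w 0)^2 + (z 1 - w 1)^2 + (z 2 - w 2)^2 < r^2 := by
  rw [EuclideanSpace.dist_eq, Real.sqrt_lt' hr]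
  simp [Fin.sum_univ_three, Real.dist_eq, sq_abs]

theorem vol_inter_single (d r : ℝ) (hd : 0 < d) (hdr : d < 2*r) :
    volume (Metric.ball (d • EuclideanSpace.single (0:Fin 3) (1:ℝ)) r ∩ Metric.ball (0:E3) r)
    = ENNReal.ofReal (π * (4*r^3/3 - r^2*d + d^3/12)) := by
  have hr : 0 < r := by linarith
  set T : Set (Fin 3 → ℝ) :=
    {y : Fin 3 → ℝ | (y 0 - d)^2 + (y 1)^2 + (y 2)^2 < r^2 ∧ (y 0)^2 + (y 1)^2 + (y 2)^2 < r^2}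
    with hTdef
  have hTmeas : MeasurableSet T := by
    rw [hTdef, Set.setOf_and]
    exact ((isOpen_lt (by fun_prop) continuous_const).inter
      (isOpen_lt (by fun_prop) continuous_const)).measurableSet
  -- step 1: to pi space
  have h1 : ((MeasurableEquiv.toLp 2 (Fin 3 → ℝ)).symm).symm ⁻¹'
      (Metric.ball (d • EuclideanSpace.single (0:Fin 3) (1:ℝ)) r ∩ Metric.ball (0:E3) r) = T := by
    ext y
    have hc : ∀ i : Fin 3, (((MeasurableEquiv.toLp 2 (Fin 3 → ℝ)).symm).symm y) i = y i :=
      fun _ => rfl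
    simp only [Set.mem_preimage, Set.mem_inter_iff, Metric.mem_ball, hTdef, Set.mem_setOf_eq,
      dist_lt hr]
    simp [hc]
  rw [← ((EuclideanSpace.volume_preserving_symm_measurableEquiv_toLp (Fin 3)).symm).measure_preimage
    (measurableSet_ball.inter measurableSet_ball).nullMeasurableSet, h1]
  -- step 2: slice
  set T2 : Set (ℝ × (Fin 2 → ℝ)) :=
    {q : ℝ × (Fin 2 → ℝ) | (q.1 - d)^2 + (q.2 0)^2 + (q.2 1)^2 < r^2 ∧
      q.1^2 + (q.2 0)^2 + (q.2 1)^2 < r^2} with hT2def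
  have hT2meas : MeasurableSet T2 := by
    rw [hT2def, Set.setOf_and]
    exact ((isOpen_lt (by fun_prop) continuous_const).inter
      (isOpen_lt (by fun_prop) continuous_const)).measurableSet
  have h2 : (MeasurableEquiv.piFinSuccAbove (fun _ : Fin 3 => ℝ) 0).symm ⁻¹' T = T2 := by
    ext ⟨t, p⟩
    have e0 : ((MeasurableEquiv.piFinSuccAbove (fun _ : Fin 3 => ℝ) 0).symm (t, p)) 0 = t := rfl
    have e1 : ((MeasurableEquiv.piFinSuccAbove (fun _ : Fin 3 => ℝ) 0).symm (t, p)) 1 = p 0 := rfl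
    have e2 : ((MeasurableEquiv.piFinSuccAbove (fun _ : Fin 3 => ℝ) 0).symm (t, p)) 2 = p 1 := rfl
    simp only [Set.mem_preimage, hTdef, hT2def, Set.mem_setOf_eq, e0, e1, e2]
  rw [← ((volume_preserving_piFinSuccAbove (fun _ : Fin 3 => ℝ) 0).symm).measure_preimage
    hTmeas.nullMeasurableSet, h2, Measure.volume_eq_prod, Measure.prod_apply hT2meas]
  -- step 3: slices are disks
  have h3 : ∀ t : ℝ, volume (Prod.mk t ⁻¹' T2)
      = ENNReal.ofReal (π * max 0 (r^2 - max ((t-d)^2) (t^2))) := by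
    intro t
    have : Prod.mk t ⁻¹' T2 = {p : Fin 2 → ℝ | (p 0)^2 + (p 1)^2 < r^2 - max ((t-d)^2) (t^2)} := by
      ext p
      simp only [Set.mem_preimage, hT2def, Set.mem_setOf_eq]
      rw [lt_sub_iff_add_lt]
      constructor
      · rintro ⟨ha, hb⟩
        rcases max_cases ((t-d)^2) (t^2) with ⟨h, _⟩ | ⟨h, _⟩ <;> rw [h] <;> linarith
      · intro h
        have h1 := le_max_left ((t-d)^2) (t^2)
        have h2 := le_max_right ((t-d)^2) (t^2)
        exact ⟨by linarith, by linarith⟩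
    rw [this, slice_vol]
  simp_rw [h3]
  -- step 4: lintegral to integral
  have hgnn : 0 ≤ᵐ[volume] fun t : ℝ => π * max 0 (r^2 - max ((t-d)^2) (t^2)) := by
    filter_upwards with t
    positivity
  have hgint : Integrable (fun t : ℝ => π * max 0 (r^2 - max ((t-d)^2) (t^2))) :=
    (integrable_g d r hr).const_mul π
  rw [← ofReal_integral_eq_lintegral_ofReal hgint hgnn, integral_const_mul, oneD d r hd hdr]

noncomputable def capVol (d r : ℝ) : ℝ :=
  if d < 2*r then π * (4*r^3/3 - r^2*d + d^3/12) else 0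

theorem outer_int (d : ℝ) (hd : 0 < d) :
    ∫ r in Ioi (0:ℝ), (1/r^5) * capVol d r = π / d := by
  have hc : 0 < d/2 := by linarith
  have h0 : EqOn (fun r : ℝ => (1/r^5) * capVol d r)
      ((Ioi (d/2)).indicator (fun r : ℝ => (1/r^5) * capVol d r)) (Ioi 0) := by
    intro r hr
    by_cases h : r ∈ Ioi (d/2)
    · rw [Set.indicator_of_mem h]
    · rw [Set.indicator_of_notMem h]
      simp only [Set.mem_Ioi, not_lt] at h
      have : ¬ (d < 2*r) := by linarith
      simp [capVol, this]
  rw [setIntegral_congr_fun measurableSet_Ioi h0, setIntegral_indicator measurableSet_Ioi,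
    Set.Ioi_inter_Ioi, max_eq_right (by linarith : (0:ℝ) ≤ d/2)]
  have h1 : EqOn (fun r : ℝ => (1/r^5) * capVol d r)
      (fun r : ℝ => (4*π/3) * r ^ (-2:ℝ) - (π*d) * r ^ (-3:ℝ) + (π*d^3/12) * r ^ (-5:ℝ))
      (Ioi (d/2)) := by
    intro r hr
    simp only [Set.mem_Ioi] at hr
    have hr0 : 0 < r := lt_trans hc hr
    have hd2 : d < 2*r := by linarith
    have hpow : ∀ n : ℕ, r ^ (-(n:ℝ)) = (r^n)⁻¹ := fun n => by
      rw [Real.rpow_neg hr0.le, Real.rpow_natCast]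
    have e2 : r ^ (-2:ℝ) = (r^2)⁻¹ := by rw [show (-2:ℝ) = -((2:ℕ):ℝ) by norm_num, hpow]
    have e3 : r ^ (-3:ℝ) = (r^3)⁻¹ := by rw [show (-3:ℝ) = -((3:ℕ):ℝ) by norm_num, hpow]
    have e5 : r ^ (-5:ℝ) = (r^5)⁻¹ := by rw [show (-5:ℝ) = -((5:ℕ):ℝ) by norm_num, hpow]
    simp only [capVol, if_pos hd2, e2, e3, e5]
    field_simp
  rw [setIntegral_congr_fun measurableSet_Ioi h1]
  have Ia : IntegrableOn (fun r : ℝ => (4*π/3) * r ^ (-2:ℝ)) (Ioi (d/2)) :=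
    (integrableOn_Ioi_rpow_of_lt (by norm_num) hc).const_mul _
  have Ib : IntegrableOn (fun r : ℝ => (π*d) * r ^ (-3:ℝ)) (Ioi (d/2)) :=
    (integrableOn_Ioi_rpow_of_lt (by norm_num) hc).const_mul _
  have Ic : IntegrableOn (fun r : ℝ => (π*d^3/12) * r ^ (-5:ℝ)) (Ioi (d/2)) :=
    (integrableOn_Ioi_rpow_of_lt (by norm_num) hc).const_mul _
  have Iab : IntegrableOn (fun r : ℝ => (4*π/3) * r ^ (-2:ℝ) - (π*d) * r ^ (-3:ℝ)) (Ioi (d/2)) :=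
    Ia.sub Ib
  rw [integral_add Iab Ic, integral_sub Ia Ib,
    integral_const_mul, integral_const_mul, integral_const_mul,
    integral_Ioi_rpow_of_lt (by norm_num) hc,
    integral_Ioi_rpow_of_lt (by norm_num) hc,
    integral_Ioi_rpow_of_lt (by norm_num) hc]
  norm_num
  have e1 : (d/2) ^ (-1:ℝ) = (d/2)⁻¹ := Real.rpow_neg_one _
  have e2 : (d/2) ^ (-2:ℝ) = ((d/2)^2)⁻¹ := by
    rw [show (-2:ℝ) = -((2:ℕ):ℝ) by norm_num, Real.rpow_neg hc.le, Real.rpow_natCast]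
  have e4 : (d/2) ^ (-4:ℝ) = ((d/2)^4)⁻¹ := by
    rw [show (-4:ℝ) = -((4:ℕ):ℝ) by norm_num, Real.rpow_neg hc.le, Real.rpow_natCast]
  rw [e1]
  have hd0 : d ≠ 0 := hd.ne'
  field_simp
  ring

/-- The Fefferman–de la Llave formula for the Coulomb potential in ℝ³:
`1/|x| = (1/π) ∫_0^∞ r⁻⁵ (1_{B_r} * 1_{B_r})(x) dr` for all `x ≠ 0`. -/
theorem fefferman_de_la_llave_coulomb
    (x : EuclideanSpace ℝ (Fin 3)) (hx : x ≠ 0) :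
    1 / ‖x‖ = (1 / π) * ∫ r in Ioi (0:ℝ), (1 / r ^ 5) *
      ∫ y, (Metric.ball (0 : EuclideanSpace ℝ (Fin 3)) r).indicator
              (fun _ => (1:ℝ)) (x - y) *
           (Metric.ball (0 : EuclideanSpace ℝ (Fin 3)) r).indicator
              (fun _ => (1:ℝ)) y := by
  have hd : 0 < ‖x‖ := norm_pos_iff.mpr hx
  have key : EqOn
      (fun r : ℝ => (1 / r ^ 5) *
        ∫ y, (Metric.ball (0 : EuclideanSpace ℝ (Fin 3)) r).indicator (fun _ => (1:ℝ)) (x - y) *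
             (Metric.ball (0 : EuclideanSpace ℝ (Fin 3)) r).indicator (fun _ => (1:ℝ)) y)
      (fun r : ℝ => (1 / r ^ 5) * capVol ‖x‖ r) (Ioi 0) := by
    intro r hr
    simp only [Set.mem_Ioi] at hr
    simp only
    congr 1
    rw [inner_int x r]
    by_cases h : ‖x‖ < 2 * r
    · rw [rot x hx r, vol_inter_single ‖x‖ r hd h, capVol, if_pos h,
        ENNReal.toReal_ofReal]
      have heq : 4*r^3/3 - r^2*‖x‖ + ‖x‖^3/12 = (2*r-‖x‖)^2*(4*r+‖x‖)/12 := by ring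
      have : 0 ≤ 4*r^3/3 - r^2*‖x‖ + ‖x‖^3/12 := by
        rw [heq]
        positivity
      positivity
    · have hempty : Metric.ball x r ∩ Metric.ball (0 : EuclideanSpace ℝ (Fin 3)) r = ∅ := by
        ext y
        simp only [Set.mem_inter_iff, Metric.mem_ball, Set.mem_empty_iff_false, iff_false,
          not_and, not_lt]
        intro hy
        have h1 : ‖x‖ ≤ dist y x + dist y 0 := by
          rw [dist_comm y x, dist_eq_norm, dist_eq_norm, sub_zero]
          calc ‖x‖ = ‖(x - y) + y‖ := by rw [sub_add_cancel]
          _ ≤ ‖x - y‖ + ‖y‖ := norm_add_le _ _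
        push_neg at h
        linarith
      rw [hempty, capVol, if_neg h]
      simp
  rw [setIntegral_congr_fun measurableSet_Ioi key, outer_int ‖x‖ hd]
  rw [div_mul_div_comm, one_mul, ← div_div, div_self Real.pi_ne_zero]
end

section
/- Let $d\ge 1$, $Q=[0,L]^d$, and let $u_k$ be the Dirichlet sine eigenfunctions. If $S_M$ denotes the indices of the $M$ lowest eigenvalues, then $\frac{1}{M}\sum_{k\in S_M}|u_k|^2 \to \frac{\mathbf{1}_Q}{|Q|}$ strongly in $L^p(Q)$ for every $1\le p<\infty$ as $M\to\infty$. -/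
set_option maxHeartbeats 1000000


open MeasureTheory Filter Set Real



lemma aux_cos_cont (L c : ℝ) : Continuous (fun x : ℝ => Real.cos (2*π*c*x/L)) :=
  Real.continuous_cos.comp ((continuous_const.mul continuous_id).div_const L)

lemma aux_cos_int (L : ℝ) (hL : 0 < L) (m : ℤ) (hm : m ≠ 0) :
    ∫ x in (0:ℝ)..L, Real.cos (2*π*m*x/L) = 0 := by
  set c := 2*π*m/L with hcdef
  have hc : c ≠ 0 := by
    have := Real.pi_ne_zero
    simp only [hcdef]
    positivity
  have hrw : ∀ x : ℝ, 2*π*(m:ℝ)*x/L = c*x := fun x => by rw [hcdef]; ring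
  simp_rw [hrw]
  have h1 : ∀ x : ℝ, HasDerivAt (fun y => Real.sin (c*y) / c) (Real.cos (c*x)) x := by
    intro x
    have := (((hasDerivAt_id x).const_mul c).sin).div_const c
    simpa [mul_one, mul_div_cancel_right₀ _ hc] using this
  rw [intervalIntegral.integral_eq_sub_of_hasDerivAt (fun x _ => h1 x)
      (Continuous.intervalIntegrable
        (Real.continuous_cos.comp (continuous_const.mul continuous_id)) _ _)]
  have h2 : c*L = (2*m : ℤ) * π := by
    rw [hcdef]; push_cast; field_simp
  rw [h2, Real.sin_int_mul_pi]
  simp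

lemma aux_cos_nat (L : ℝ) (hL : 0 < L) (a : ℕ) (ha : 0 < a) :
    ∫ x in (0:ℝ)..L, Real.cos (2*π*(a:ℝ)*x/L) = 0 := by
  have h := aux_cos_int L hL (a:ℤ) (by omega)
  push_cast at h
  exact h

lemma aux_cos_sub (L : ℝ) (hL : 0 < L) (a b : ℕ) :
    ∫ x in (0:ℝ)..L, Real.cos (2*π*((a:ℝ)-(b:ℝ))*x/L) = if a = b then L else 0 := by
  split
  · next h =>
    subst h
    simp
  · next h =>
    have h2 := aux_cos_int L hL ((a:ℤ)-(b:ℤ)) (by omega)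
    push_cast at h2
    exact h2

lemma aux_cos_add (L : ℝ) (hL : 0 < L) (a b : ℕ) (ha : 0 < a) :
    ∫ x in (0:ℝ)..L, Real.cos (2*π*((a:ℝ)+(b:ℝ))*x/L) = 0 := by
  have h2 := aux_cos_int L hL ((a:ℤ)+(b:ℤ)) (by omega)
  push_cast at h2
  exact h2

lemma aux_J (L : ℝ) (hL : 0 < L) (a b : ℕ) (ha : 0 < a) (hb : 0 < b) :
    ∫ x in (0:ℝ)..L, ((2/L)*Real.sin (π*a*x/L)^2) * ((2/L)*Real.sin (π*b*x/L)^2)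
      = (1/L)*(1 + if a = b then (1/2 : ℝ) else 0) := by
  have key : ∀ x : ℝ, ((2/L)*Real.sin (π*a*x/L)^2) * ((2/L)*Real.sin (π*b*x/L)^2)
      = (1/L^2) * (1 - Real.cos (2*π*(a:ℝ)*x/L) - Real.cos (2*π*(b:ℝ)*x/L)
          + (1/2) * Real.cos (2*π*((a:ℝ)-(b:ℝ))*x/L)
          + (1/2) * Real.cos (2*π*((a:ℝ)+(b:ℝ))*x/L)) := by
    intro x
    have hA : Real.sin (π*a*x/L)^2 = 1/2 - Real.cos (2*(π*a*x/L))/2 := Real.sin_sq_eq_half_sub _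
    have hB : Real.sin (π*b*x/L)^2 = 1/2 - Real.cos (2*(π*b*x/L))/2 := Real.sin_sq_eq_half_sub _
    have hP := Real.two_mul_cos_mul_cos (2*(π*a*x/L)) (2*(π*b*x/L))
    have e1 : 2*π*(a:ℝ)*x/L = 2*(π*a*x/L) := by ring
    have e2 : 2*π*(b:ℝ)*x/L = 2*(π*b*x/L) := by ring
    have e3 : 2*π*((a:ℝ)-(b:ℝ))*x/L = 2*(π*a*x/L) - 2*(π*b*x/L) := by ring
    have e4 : 2*π*((a:ℝ)+(b:ℝ))*x/L = 2*(π*a*x/L) + 2*(π*b*x/L) := by ring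
    rw [hA, hB, e1, e2, e3, e4]
    linear_combination (1/(2*L^2)) * hP
  simp_rw [key]
  rw [intervalIntegral.integral_const_mul]
  have i1 : IntervalIntegrable (fun x : ℝ => Real.cos (2*π*(a:ℝ)*x/L)) volume 0 L :=
    (aux_cos_cont L a).intervalIntegrable _ _
  have i2 : IntervalIntegrable (fun x : ℝ => Real.cos (2*π*(b:ℝ)*x/L)) volume 0 L :=
    (aux_cos_cont L b).intervalIntegrable _ _
  have i3 : IntervalIntegrable (fun x : ℝ => (1/2) * Real.cos (2*π*((a:ℝ)-(b:ℝ))*x/L)) volume 0 L :=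
    (continuous_const.mul (aux_cos_cont L _)).intervalIntegrable _ _
  have i4 : IntervalIntegrable (fun x : ℝ => (1/2) * Real.cos (2*π*((a:ℝ)+(b:ℝ))*x/L)) volume 0 L :=
    (continuous_const.mul (aux_cos_cont L _)).intervalIntegrable _ _
  have ic : IntervalIntegrable (fun _ : ℝ => (1:ℝ)) volume 0 L := intervalIntegrable_const
  rw [intervalIntegral.integral_add (((ic.sub i1).sub i2).add i3) i4,
      intervalIntegral.integral_add ((ic.sub i1).sub i2) i3,
      intervalIntegral.integral_sub (ic.sub i1) i2,
      intervalIntegral.integral_sub ic i1,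
      intervalIntegral.integral_const_mul, intervalIntegral.integral_const_mul,
      aux_cos_nat L hL a ha, aux_cos_nat L hL b hb, aux_cos_sub L hL a b,
      aux_cos_add L hL a b ha]
  simp only [intervalIntegral.integral_const, smul_eq_mul, sub_zero, mul_one]
  split
  · field_simp; ring
  · field_simp; ring

lemma aux_one (L : ℝ) (hL : 0 < L) (a : ℕ) (ha : 0 < a) :
    ∫ x in (0:ℝ)..L, (2/L)*Real.sin (π*a*x/L)^2 = 1 := by
  have key : ∀ x : ℝ, (2/L)*Real.sin (π*a*x/L)^2
      = (1/L) * (1 - Real.cos (2*π*(a:ℝ)*x/L)) := by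
    intro x
    have hA : Real.sin (π*a*x/L)^2 = 1/2 - Real.cos (2*(π*a*x/L))/2 := Real.sin_sq_eq_half_sub _
    have e1 : 2*π*(a:ℝ)*x/L = 2*(π*a*x/L) := by ring
    rw [hA, e1]
    ring
  simp_rw [key]
  rw [intervalIntegral.integral_const_mul]
  have i1 : IntervalIntegrable (fun x : ℝ => Real.cos (2*π*(a:ℝ)*x/L)) volume 0 L :=
    (aux_cos_cont L a).intervalIntegrable _ _
  rw [intervalIntegral.integral_sub intervalIntegrable_const i1, aux_cos_nat L hL a ha]
  simp only [intervalIntegral.integral_const, smul_eq_mul, sub_zero, mul_one]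
  field_simp

lemma aux_fubini (L : ℝ) {d : ℕ} (f : Fin d → ℝ → ℝ) :
    ∫ x in Set.pi Set.univ (fun _ : Fin d => Icc (0:ℝ) L), ∏ i, f i (x i)
      = ∏ i, ∫ t in Set.Icc (0:ℝ) L, f i t := by
  rw [← MeasureTheory.integral_indicator (MeasurableSet.univ_pi fun _ => measurableSet_Icc)]
  have h : (Set.pi Set.univ fun _ : Fin d => Icc (0:ℝ) L).indicator (fun x => ∏ i, f i (x i))
      = fun x => ∏ i, (Icc (0:ℝ) L).indicator (f i) (x i) := by
    funext x
    by_cases hx : x ∈ Set.pi Set.univ fun _ : Fin d => Icc (0:ℝ) L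
    · rw [Set.indicator_of_mem hx]
      exact Finset.prod_congr rfl fun i _ =>
        (Set.indicator_of_mem (hx i (Set.mem_univ i)) (f i)).symm
    · rw [Set.indicator_of_notMem hx]
      rw [Set.mem_pi] at hx
      push_neg at hx
      obtain ⟨i, _, hi⟩ := hx
      exact (Finset.prod_eq_zero (Finset.mem_univ i)
        (Set.indicator_of_notMem hi (f i))).symm
  rw [h]
  beta_reduce
  rw [MeasureTheory.integral_fintype_prod_volume_eq_prod
    (f := fun i => (Icc (0:ℝ) L).indicator (f i))]
  exact Finset.prod_congr rfl fun i _ =>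
    (MeasureTheory.integral_indicator measurableSet_Icc)

lemma aux_Icc_eq (L : ℝ) (hL : 0 < L) (f : ℝ → ℝ) :
    ∫ t in Set.Icc (0:ℝ) L, f t = ∫ t in (0:ℝ)..L, f t := by
  rw [MeasureTheory.integral_Icc_eq_integral_Ioc, intervalIntegral.integral_of_le hL.le]

lemma aux_int_one (L : ℝ) (hL : 0 < L) {d : ℕ} (k : Fin d → ℕ) (hk : ∀ i, 0 < k i) :
    ∫ x in Set.pi Set.univ (fun _ : Fin d => Icc (0:ℝ) L),
      ∏ i, ((2/L) * Real.sin (π * k i * x i / L)^2) = 1 := by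
  rw [aux_fubini L (fun i t => (2/L) * Real.sin (π * k i * t / L)^2)]
  rw [Finset.prod_congr rfl fun i _ => (aux_Icc_eq L hL _).trans (aux_one L hL (k i) (hk i))]
  simp

lemma aux_int_two (L : ℝ) (hL : 0 < L) {d : ℕ} (k k' : Fin d → ℕ)
    (hk : ∀ i, 0 < k i) (hk' : ∀ i, 0 < k' i) :
    ∫ x in Set.pi Set.univ (fun _ : Fin d => Icc (0:ℝ) L),
      ∏ i, (((2/L) * Real.sin (π * k i * x i / L)^2) * ((2/L) * Real.sin (π * k' i * x i / L)^2))
      = (1/L)^d * ∏ i, (1 + if k i = k' i then (1/2:ℝ) else 0) := by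
  rw [aux_fubini L (fun i t => ((2/L) * Real.sin (π * k i * t / L)^2) * ((2/L) * Real.sin (π * k' i * t / L)^2))]
  rw [Finset.prod_congr rfl fun i _ => (aux_Icc_eq L hL _).trans (aux_J L hL (k i) (k' i) (hk i) (hk' i))]
  rw [Finset.prod_mul_distrib, Finset.prod_const, Finset.card_univ, Fintype.card_fin]


-- slice bound
lemma aux_slice (d s : ℕ) (T : Finset (Fin d → ℕ)) (hT : ∀ k ∈ T, ∀ j, k j ≤ s)
    (i : Fin d) (a : ℕ) :
    ((T.filter (fun k => k i = a)).card) ≤ (s+1)^(d-1) := by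
  classical
  have hcard : Fintype.card ({j : Fin d // j ≠ i} → Fin (s+1)) = (s+1)^(d-1) := by
    rw [Fintype.card_fun, Fintype.card_fin]
    congr 1
    rw [Fintype.card_subtype_compl, Fintype.card_subtype_eq, Fintype.card_fin]
  rw [← hcard, ← Finset.card_univ]
  apply Finset.card_le_card_of_injOn
    (fun k => fun j : {j : Fin d // j ≠ i} => (⟨min (k j.1) s, by omega⟩ : Fin (s+1)))
  · intro k _; exact Finset.mem_univ _
  · intro k hk k' hk' h
    simp only [Finset.coe_filter, Set.mem_setOf_eq] at hk hk'
    funext j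
    by_cases hj : j = i
    · rw [hj, hk.2, hk'.2]
    · have h2 := congrArg Fin.val (congrFun h ⟨j, hj⟩)
      simp only [min_eq_left (hT k hk.1 j), min_eq_left (hT k' hk'.1 j)] at h2
      exact h2

-- whole-set bound
lemma aux_whole (d s : ℕ) (T : Finset (Fin d → ℕ)) (hT : ∀ k ∈ T, ∀ j, k j ≤ s) :
    T.card ≤ (s+1)^d := by
  classical
  have hcard : Fintype.card (Fin d → Fin (s+1)) = (s+1)^d := by
    rw [Fintype.card_fun, Fintype.card_fin, Fintype.card_fin]
  rw [← hcard, ← Finset.card_univ]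
  apply Finset.card_le_card_of_injOn
    (fun k => fun j : Fin d => (⟨min (k j) s, by omega⟩ : Fin (s+1)))
  · intro k _; exact Finset.mem_univ _
  · intro k hk k' hk' h
    funext j
    have h2 := congrArg Fin.val (congrFun h j)
    simp only [min_eq_left (hT k hk j), min_eq_left (hT k' hk' j)] at h2
    exact h2

-- lower bound for card via box inclusion
lemma aux_lower (d r : ℕ) (T : Finset (Fin d → ℕ))
    (hbox : ∀ g : Fin d → ℕ, (∀ i, 1 ≤ g i) → (∀ i, g i ≤ r) → g ∈ T) :
    r^d ≤ T.card := by
  classical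
  have hcard : Fintype.card (Fin d → Fin r) = r^d := by
    rw [Fintype.card_fun, Fintype.card_fin, Fintype.card_fin]
  rw [← hcard, ← Finset.card_univ]
  apply Finset.card_le_card_of_injOn (fun g => fun i : Fin d => (g i : ℕ) + 1)
  · intro g _
    exact hbox _ (fun i => by dsimp only; omega) (fun i => by have := (g i).isLt; dsimp only; omega)
  · intro g _ g' _ h
    funext i
    have h2 := congrFun h i
    simp only at h2
    exact Fin.ext (by omega)

-- pairs bound
lemma aux_pairs (d s : ℕ) (T : Finset (Fin d → ℕ)) (hT : ∀ k ∈ T, ∀ j, k j ≤ s) :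
    ((T ×ˢ T).filter (fun p => ∃ i, p.1 i = p.2 i)).card ≤ d * (T.card * (s+1)^(d-1)) := by
  classical
  have hsub : (T ×ˢ T).filter (fun p => ∃ i, p.1 i = p.2 i) ⊆
      Finset.univ.biUnion (fun i : Fin d => (T ×ˢ T).filter (fun p => p.1 i = p.2 i)) := by
    intro p hp
    simp only [Finset.mem_filter] at hp
    obtain ⟨hpT, i, hi⟩ := hp
    exact Finset.mem_biUnion.2 ⟨i, Finset.mem_univ _, Finset.mem_filter.2 ⟨hpT, hi⟩⟩
  calc ((T ×ˢ T).filter (fun p => ∃ i, p.1 i = p.2 i)).card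
      ≤ (Finset.univ.biUnion (fun i : Fin d => (T ×ˢ T).filter (fun p => p.1 i = p.2 i))).card :=
        Finset.card_le_card hsub
    _ ≤ ∑ i : Fin d, ((T ×ˢ T).filter (fun p => p.1 i = p.2 i)).card := Finset.card_biUnion_le
    _ ≤ ∑ _i : Fin d, (T.card * (s+1)^(d-1)) := by
        apply Finset.sum_le_sum
        intro i _
        -- fiberwise
        rw [Finset.card_eq_sum_card_fiberwise (f := Prod.fst) (t := T)
          (fun p hp => (Finset.mem_product.1 (Finset.mem_filter.1 hp).1).1)]
        calc ∑ k ∈ T, (((T ×ˢ T).filter (fun p => p.1 i = p.2 i)).filter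
              (fun p => p.1 = k)).card
            ≤ ∑ k ∈ T, (s+1)^(d-1) := by
              apply Finset.sum_le_sum
              intro k _
              have hinj : ∀ p ∈ ((T ×ˢ T).filter (fun p => p.1 i = p.2 i)).filter
                  (fun p => p.1 = k), p.2 ∈ T.filter (fun k' => k' i = k i) := by
                intro p hp
                simp only [Finset.mem_filter, Finset.mem_product] at hp
                refine Finset.mem_filter.2 ⟨hp.1.1.2, ?_⟩
                rw [← hp.1.2, hp.2]
              calc (((T ×ˢ T).filter (fun p => p.1 i = p.2 i)).filter (fun p => p.1 = k)).card
                  ≤ (T.filter (fun k' => k' i = k i)).card := by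
                    apply Finset.card_le_card_of_injOn Prod.snd hinj
                    intro p hp q hq h2
                    simp only [Finset.coe_filter, Set.mem_setOf_eq] at hp hq
                    exact Prod.ext (hp.2.trans hq.2.symm) h2
                _ ≤ (s+1)^(d-1) := aux_slice d s T hT i (k i)
            _ = T.card * (s+1)^(d-1) := by rw [Finset.sum_const, smul_eq_mul]
    _ = d * (T.card * (s+1)^(d-1)) := by rw [Finset.sum_const, Finset.card_univ,
          Fintype.card_fin, smul_eq_mul]


lemma aux_count (d : ℕ) (hd : 1 ≤ d) (S : ℕ → Finset (Fin d → ℕ))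
    (hpos : ∀ M, ∀ k ∈ S M, ∀ i, 0 < k i)
    (hcard : ∀ M, (S M).card = M)
    (hminN : ∀ M, ∀ k ∈ S M, ∀ k' : Fin d → ℕ, (∀ i, 0 < k' i) → k' ∉ S M →
      (∑ i, (k i)^2) ≤ ∑ i, (k' i)^2) :
    Tendsto (fun M => (((S M ×ˢ S M).filter (fun p => ∃ i, p.1 i = p.2 i)).card : ℝ) / (M:ℝ)^2)
      atTop (nhds 0) := by
  classical
  obtain ⟨e, rfl⟩ : ∃ e, d = e + 1 := ⟨d - 1, by omega⟩
  set n : (Fin (e+1) → ℕ) → ℕ := fun k => ∑ i, (k i)^2 with hn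
  set ρ : ℕ → ℕ := fun M => (S M).sup n with hρ
  set s : ℕ → ℕ := fun M => Nat.sqrt (ρ M) with hs
  -- upper bound on coordinates
  have hub : ∀ M, ∀ k ∈ S M, ∀ j, k j ≤ s M := by
    intro M k hk j
    have h1 : (k j)^2 ≤ n k := by
      apply Finset.single_le_sum (f := fun i => (k i)^2) (fun i _ => Nat.zero_le _)
        (Finset.mem_univ j)
    have h2 : n k ≤ ρ M := Finset.le_sup hk
    rw [Nat.le_sqrt]
    calc k j * k j = (k j)^2 := (sq (k j)).symm
      _ ≤ ρ M := le_trans h1 h2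
  have hwhole : ∀ M, M ≤ (s M + 1)^(e+1) := by
    intro M
    have := aux_whole (e+1) (s M) (S M) (hub M)
    rwa [hcard M] at this
  -- s tends to infinity
  have hst : Tendsto s atTop atTop := by
    rw [tendsto_atTop]
    intro b
    rw [eventually_atTop]
    refine ⟨(b+1)^(e+1), fun M hM => ?_⟩
    by_contra hc
    push_neg at hc
    have h1 : (s M + 1)^(e+1) ≤ b^(e+1) := Nat.pow_le_pow_left (by omega) (e+1)
    have h2 : b^(e+1) < (b+1)^(e+1) := Nat.pow_lt_pow_left (by omega) (by omega)
    have := hwhole M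
    omega
  -- membership criterion
  have hmem : ∀ M, 1 ≤ M → ∀ k' : Fin (e+1) → ℕ, (∀ i, 0 < k' i) → n k' < ρ M → k' ∈ S M := by
    intro M hM k' hk' hlt
    by_contra hc
    obtain ⟨k₀, hk₀, hk₀eq⟩ := Finset.exists_mem_eq_sup (S M)
      (Finset.card_pos.1 (by rw [hcard]; omega)) n
    have h5 : n k₀ ≤ n k' := hminN M k₀ hk₀ k' hk' hc
    have h6 : ρ M = n k₀ := hk₀eq
    omega
  -- lower bound on M
  have hlow : ∀ M, 1 ≤ M → 4*(e+1) ≤ s M → (s M/(2*(e+1)))^(e+1) ≤ M := by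
    intro M hM hsd
    set r := s M / (2*(e+1)) with hr
    have hr2 : 2 ≤ r := by
      rw [hr, Nat.le_div_iff_mul_le (by omega)]
      omega
    have h2dr : 2*(e+1)*r ≤ s M := by
      rw [hr, mul_comm]
      exact Nat.div_mul_le_self _ _
    have hsq : s M * s M ≤ ρ M := by
      have := Nat.sqrt_le' (ρ M)
      rw [pow_two] at this
      exact this
    have e1 : (2*(e+1)*r)*(2*(e+1)*r) ≤ ρ M := le_trans (Nat.mul_le_mul h2dr h2dr) hsq
    have e2 : (e+1)*r^2 < (2*(e+1)*r)*(2*(e+1)*r) := by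
      have h0 : 0 < (e+1)*r^2 := by positivity
      calc (e+1)*r^2 = 1*((e+1)*r^2) := (one_mul _).symm
        _ < (4*(e+1))*((e+1)*r^2) := mul_lt_mul_of_pos_right (by omega) h0
        _ = (2*(e+1)*r)*(2*(e+1)*r) := by ring
    have hbox : ∀ g : Fin (e+1) → ℕ, (∀ i, 1 ≤ g i) → (∀ i, g i ≤ r) → g ∈ S M := by
      intro g hg1 hgr
      apply hmem M hM g (fun i => hg1 i)
      have : n g ≤ (e+1)*r^2 := by
        calc n g ≤ ∑ _i : Fin (e+1), r^2 := Finset.sum_le_sum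
              (fun i _ => Nat.pow_le_pow_left (hgr i) 2)
          _ = (e+1)*r^2 := by
              rw [Finset.sum_const, Finset.card_univ, Fintype.card_fin, smul_eq_mul]
      omega
    have := aux_lower (e+1) r (S M) hbox
    rwa [hcard M] at this
  -- final squeeze
  have hC : Tendsto (fun M => (4*((e+1):ℝ)^2*(8*(e+1))^e) / (s M : ℝ)) atTop (nhds 0) :=
    (tendsto_const_div_atTop_nhds_zero_nat _).comp hst
  apply squeeze_zero' (g := fun M => (4*((e+1):ℝ)^2*(8*(e+1))^e) / (s M : ℝ))
  · exact Eventually.of_forall fun M => by positivity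
  · filter_upwards [hst.eventually_ge_atTop (4*(e+1)), eventually_ge_atTop 1] with M hsd hM
    set r := s M / (2*(e+1)) with hr
    have hr2 : 2 ≤ r := by
      rw [hr, Nat.le_div_iff_mul_le (by omega)]
      omega
    have hBn := aux_pairs (e+1) (s M) (S M) (hub M)
    rw [hcard M] at hBn
    have hrM := hlow M hM hsd
    -- real versions
    have n1 : (((S M ×ˢ S M).filter (fun p => ∃ i, p.1 i = p.2 i)).card : ℝ)
        ≤ ((e+1):ℝ) * ((M:ℝ) * ((s M:ℝ)+1)^e) := by
      calc (((S M ×ˢ S M).filter (fun p => ∃ i, p.1 i = p.2 i)).card : ℝ)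
          ≤ (((e+1) * (M * (s M + 1)^e) : ℕ) : ℝ) := Nat.cast_le.2 hBn
        _ = ((e+1):ℝ) * ((M:ℝ) * ((s M:ℝ)+1)^e) := by push_cast; ring
    have n2 : ((r:ℝ))^(e+1) ≤ (M:ℝ) := by
      calc ((r:ℝ))^(e+1) = ((r^(e+1) : ℕ) : ℝ) := by push_cast; ring
        _ ≤ (M:ℝ) := Nat.cast_le.2 hrM
    have n3 : (s M : ℝ) ≤ 4*((e+1):ℝ)*(r:ℝ) := by
      have hmod := Nat.div_add_mod (s M) (2*(e+1))
      have hmlt : s M % (2*(e+1)) < 2*(e+1) := Nat.mod_lt _ (by omega)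
      have hcast : ((2*(e+1)*r + s M % (2*(e+1)) : ℕ) : ℝ) = (s M : ℝ) := by
        exact_mod_cast congrArg (Nat.cast : ℕ → ℝ) hmod
      push_cast at hcast
      have hr1 : (1:ℝ) ≤ (r:ℝ) := by exact_mod_cast (by omega : 1 ≤ r)
      have hdr : ((e+1):ℝ) ≤ ((e+1):ℝ)*(r:ℝ) := le_mul_of_one_le_right (by positivity) hr1
      have hmcast : ((s M % (2*(e+1)) : ℕ) : ℝ) < 2*((e+1):ℝ) := by
        exact_mod_cast Nat.cast_lt.2 hmlt
      linarith
    have n4 : (1:ℝ) ≤ (s M : ℝ) := by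
      have : 1 ≤ s M := by omega
      exact_mod_cast this
    simp only [Nat.add_sub_cancel] at hBn
    rw [div_le_div_iff₀ (by positivity) (by positivity)]
    have hrpos : (0:ℝ) ≤ (r:ℝ) := Nat.cast_nonneg _
    calc (((S M ×ˢ S M).filter (fun p => ∃ i, p.1 i = p.2 i)).card : ℝ) * (s M : ℝ)
        ≤ (((e+1):ℝ) * ((M:ℝ) * ((s M:ℝ)+1)^e)) * (s M : ℝ) :=
          mul_le_mul_of_nonneg_right n1 (by positivity)
      _ ≤ (((e+1):ℝ) * ((M:ℝ) * (8*((e+1):ℝ)*(r:ℝ))^e)) * (4*((e+1):ℝ)*(r:ℝ)) := by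
          gcongr <;> first | positivity | linarith
      _ = (4*((e+1):ℝ)^2*(8*((e+1):ℝ))^e) * ((M:ℝ) * (r:ℝ)^(e+1)) := by
          push_cast
          rw [mul_pow]
          ring
      _ ≤ (4*((e+1):ℝ)^2*(8*((e+1):ℝ))^e) * ((M:ℝ) * (M:ℝ)) := by
          gcongr <;> first | positivity | exact n2
      _ = (4*((e+1):ℝ)^2*(8*((e+1):ℝ))^e) * (M:ℝ)^2 := by ring
  · exact hC


lemma aux_pt (p y C η : ℝ) (hp : 1 ≤ p) (hy : 0 ≤ y) (hyC : y ≤ C) (hη : 0 < η) :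
    y ^ p ≤ η ^ p + C ^ p / η ^ 2 * y ^ (2:ℕ) := by
  have hC : 0 ≤ C := le_trans hy hyC
  have hp0 : 0 ≤ p := le_trans zero_le_one hp
  have hCp : 0 ≤ C ^ p := Real.rpow_nonneg hC p
  by_cases hyη : y ≤ η
  · have h1 : y ^ p ≤ η ^ p := Real.rpow_le_rpow hy hyη hp0
    have h2 : 0 ≤ C ^ p / η ^ 2 * y ^ (2:ℕ) := by positivity
    linarith
  · push_neg at hyη
    have h1 : y ^ p ≤ C ^ p := Real.rpow_le_rpow hy hyC hp0
    have h2 : η ^ 2 ≤ y ^ (2:ℕ) := by nlinarith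
    have h3 : C ^ p ≤ C ^ p / η ^ 2 * y ^ (2:ℕ) := by
      rw [div_mul_eq_mul_div, le_div_iff₀ (by positivity)]
      nlinarith
    have h4 : 0 ≤ η ^ p := Real.rpow_nonneg hη.le p
    linarith


/-- Equidistribution of the averaged density of the first `M` Dirichlet
eigenfunctions on the cube `Q = [0,L]^d`:
`(1/M) ∑_{k ∈ S_M} |u_k|² → 1_Q / |Q|` strongly in `L^p(Q)` for every `1 ≤ p < ∞`. -/
theorem dirichlet_eigenfunction_density_equidistribution
    (d : ℕ) (hd : 1 ≤ d) (L : ℝ) (hL : 0 < L)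
    (Q : Set (Fin d → ℝ)) (hQ : Q = Set.pi Set.univ (fun _ => Icc (0:ℝ) L))
    (u : (Fin d → ℕ) → (Fin d → ℝ) → ℝ)
    (hu : ∀ k x, u k x = ∏ i, Real.sqrt (2 / L) * Real.sin (π * k i * x i / L))
    (S : ℕ → Finset (Fin d → ℕ))
    (hpos : ∀ M, ∀ k ∈ S M, ∀ i, 0 < k i)
    (hcard : ∀ M, (S M).card = M)
    (hmin : ∀ M, ∀ k ∈ S M, ∀ k' : Fin d → ℕ, (∀ i, 0 < k' i) → k' ∉ S M →
      (∑ i, (π * k i / L) ^ 2) ≤ ∑ i, (π * k' i / L) ^ 2) :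
    ∀ p : ℝ, 1 ≤ p →
      Tendsto (fun M : ℕ =>
          ∫ x in Q, |(1 / (M : ℝ)) * (∑ k ∈ S M, u k x ^ 2) - 1 / L ^ d| ^ p)
        atTop (nhds 0) := by
  classical
  intro p hp
  have hp0 : (0:ℝ) < p := lt_of_lt_of_le zero_lt_one hp
  -- basic facts about Q
  have hQmeas : MeasurableSet Q := by
    rw [hQ]; exact MeasurableSet.univ_pi fun _ => measurableSet_Icc
  have hQcomp : IsCompact Q := by
    rw [hQ]; exact isCompact_univ_pi fun _ => isCompact_Icc
  have hQvol : (volume Q).toReal = L ^ d := by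
    rw [hQ, volume_pi_pi]
    simp [Real.volume_Icc, ENNReal.toReal_pow, ENNReal.toReal_ofReal hL.le]
  have hQfin : volume Q ≠ ⊤ := hQcomp.measure_lt_top.ne
  have hLd : (0:ℝ) < L ^ d := by positivity
  -- squared eigenfunctions as products
  have hu2 : ∀ k (x : Fin d → ℝ), u k x ^ 2
      = ∏ i, ((2/L) * Real.sin (π * k i * x i / L)^2) := by
    intro k x
    rw [hu, ← Finset.prod_pow]
    refine Finset.prod_congr rfl fun i _ => ?_
    rw [mul_pow, Real.sq_sqrt (by positivity : (0:ℝ) ≤ 2/L)]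
  -- continuity
  have hcprod : ∀ k : Fin d → ℕ,
      Continuous (fun x : Fin d → ℝ => ∏ i, ((2/L) * Real.sin (π * k i * x i / L)^2)) := by
    intro k
    apply continuous_finset_prod
    intro i _
    exact continuous_const.mul ((Real.continuous_sin.comp
      (by fun_prop : Continuous fun x : Fin d → ℝ => π * (k i:ℝ) * x i / L)).pow 2)
  have hcu2 : ∀ k : Fin d → ℕ, Continuous (fun x : Fin d → ℝ => u k x ^ 2) := by
    intro k
    have : (fun x : Fin d → ℝ => u k x ^ 2)
        = fun x => ∏ i, ((2/L) * Real.sin (π * k i * x i / L)^2) := funext fun x => hu2 k x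
    rw [this]; exact hcprod k
  have hcF : ∀ M : ℕ, Continuous (fun x : Fin d → ℝ => ∑ k ∈ S M, u k x ^ 2) :=
    fun M => continuous_finset_sum _ fun k _ => hcu2 k
  have hint : ∀ f : (Fin d → ℝ) → ℝ, Continuous f → IntegrableOn f Q volume :=
    fun f hf => hf.continuousOn.integrableOn_compact hQcomp
  -- pointwise bounds
  have hub : ∀ k (x : Fin d → ℝ), 0 ≤ u k x ^ 2 ∧ u k x ^ 2 ≤ (2/L)^d := by
    intro k x
    rw [hu2]
    constructor
    · apply Finset.prod_nonneg; intro i _; positivity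
    · calc ∏ i, ((2/L) * Real.sin (π * k i * x i / L)^2) ≤ ∏ _i : Fin d, (2/L) := by
            apply Finset.prod_le_prod
            · intro i _; positivity
            · intro i _
              exact mul_le_of_le_one_right (by positivity) (Real.sin_sq_le_one _)
        _ = (2/L)^d := by rw [Finset.prod_const, Finset.card_univ, Fintype.card_fin]
  set C : ℝ := (2/L)^d + 1/L^d with hCdef
  have hCpos : 0 < C := by positivity
  have hgb : ∀ M : ℕ, 1 ≤ M → ∀ x : Fin d → ℝ,
      |(1 / (M : ℝ)) * (∑ k ∈ S M, u k x ^ 2) - 1 / L ^ d| ≤ C := by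
    intro M hM x
    have hM0 : (0:ℝ) < M := by exact_mod_cast hM
    have h1 : 0 ≤ (1 / (M : ℝ)) * (∑ k ∈ S M, u k x ^ 2) := by
      apply mul_nonneg (by positivity)
      exact Finset.sum_nonneg fun k _ => (hub k x).1
    have h2 : (1 / (M : ℝ)) * (∑ k ∈ S M, u k x ^ 2) ≤ (2/L)^d := by
      rw [one_div, inv_mul_le_iff₀ hM0]
      calc (∑ k ∈ S M, u k x ^ 2) ≤ ∑ _k ∈ S M, (2/L)^d :=
            Finset.sum_le_sum fun k _ => (hub k x).2
        _ = M * (2/L)^d := by rw [Finset.sum_const, hcard, nsmul_eq_mul]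
    rw [abs_le]
    constructor
    · rw [hCdef]; have : (0:ℝ) < 1/L^d := by positivity
      have : (0:ℝ) ≤ (2/L)^d := by positivity
      linarith
    · rw [hCdef]; have : (0:ℝ) < 1/L^d := by positivity
      linarith
  -- integral identities
  have hIone : ∀ M, ∀ k ∈ S M, ∫ x in Q, u k x ^ 2 = 1 := by
    intro M k hk
    rw [hQ]
    simp_rw [hu2]
    exact aux_int_one L hL k (hpos M k hk)
  have hItwo : ∀ M, ∀ k ∈ S M, ∀ k' ∈ S M, ∫ x in Q, u k x ^ 2 * u k' x ^ 2
      = (1/L)^d * ∏ i, (1 + if k i = k' i then (1/2:ℝ) else 0) := by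
    intro M k hk k' hk'
    rw [hQ]
    simp_rw [hu2, ← Finset.prod_mul_distrib]
    exact aux_int_two L hL k k' (hpos M k hk) (hpos M k' hk')
  -- integral of F
  have hIF : ∀ M : ℕ, ∫ x in Q, (∑ k ∈ S M, u k x ^ 2) = M := by
    intro M
    rw [MeasureTheory.integral_finset_sum _ (fun k _ => hint _ (hcu2 k))]
    rw [Finset.sum_congr rfl (fun k hk => hIone M k hk), Finset.sum_const, hcard, nsmul_eq_mul,
      mul_one]
  -- integral of F²
  have hIF2 : ∀ M : ℕ, ∫ x in Q, (∑ k ∈ S M, u k x ^ 2)^2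
      = ∑ pr ∈ S M ×ˢ S M, (1/L)^d * ∏ i, (1 + if pr.1 i = pr.2 i then (1/2:ℝ) else 0) := by
    intro M
    have hpt : ∀ x : Fin d → ℝ, (∑ k ∈ S M, u k x ^ 2)^2
        = ∑ pr ∈ S M ×ˢ S M, u pr.1 x ^ 2 * u pr.2 x ^ 2 := by
      intro x
      rw [sq, Finset.sum_mul_sum, Finset.sum_product]
    simp_rw [hpt]
    rw [MeasureTheory.integral_finset_sum _
      (fun pr _ => hint _ ((hcu2 pr.1).mul (hcu2 pr.2)))]
    refine Finset.sum_congr rfl fun pr hpr => ?_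
    have hpr' := Finset.mem_product.1 hpr
    exact hItwo M pr.1 hpr'.1 pr.2 hpr'.2

  -- ℕ version of minimality
  have hminN : ∀ M, ∀ k ∈ S M, ∀ k' : Fin d → ℕ, (∀ i, 0 < k' i) → k' ∉ S M →
      (∑ i, (k i)^2) ≤ ∑ i, (k' i)^2 := by
    intro M k hk k' hk' hnot
    have h := hmin M k hk k' hk' hnot
    have e : ∀ m : ℕ, (π * (m:ℝ) / L)^2 = (π^2/L^2) * (m:ℝ)^2 := fun m => by
      field_simp
    simp_rw [e] at h
    rw [← Finset.mul_sum, ← Finset.mul_sum] at h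
    have hpi : (0:ℝ) < π^2/L^2 := by positivity
    have h2 : (∑ i, ((k i:ℝ))^2) ≤ ∑ i, ((k' i:ℝ))^2 := le_of_mul_le_mul_left h hpi
    exact_mod_cast h2
  -- bound on the double sum
  have hsum : ∀ M : ℕ, (∑ pr ∈ S M ×ˢ S M, ∏ i, (1 + if pr.1 i = pr.2 i then (1/2:ℝ) else 0))
      ≤ (M:ℝ)^2 + (3/2)^d *
        (((S M ×ˢ S M).filter (fun pr => ∃ i, pr.1 i = pr.2 i)).card : ℝ) := by
    intro M
    have hterm : ∀ pr : (Fin d → ℕ) × (Fin d → ℕ),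
        (∏ i, (1 + if pr.1 i = pr.2 i then (1/2:ℝ) else 0))
          ≤ 1 + (if (∃ i, pr.1 i = pr.2 i) then (3/2:ℝ)^d else 0) := by
      intro pr
      by_cases h : ∃ i, pr.1 i = pr.2 i
      · rw [if_pos h]
        have h32 : (0:ℝ) ≤ (3/2)^d := by positivity
        calc (∏ i, (1 + if pr.1 i = pr.2 i then (1/2:ℝ) else 0))
            ≤ ∏ _i : Fin d, (3/2:ℝ) := by
              apply Finset.prod_le_prod
              · intro i _; split <;> norm_num
              · intro i _; split <;> norm_num
          _ = (3/2:ℝ)^d := by rw [Finset.prod_const, Finset.card_univ, Fintype.card_fin]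
          _ ≤ 1 + (3/2:ℝ)^d := by linarith
      · rw [if_neg h]
        push_neg at h
        have heq : ∀ i ∈ Finset.univ, (1 + if pr.1 i = pr.2 i then (1/2:ℝ) else 0) = 1 :=
          fun i _ => by rw [if_neg (h i), add_zero]
        rw [Finset.prod_congr rfl heq, Finset.prod_const_one]
        norm_num
    calc (∑ pr ∈ S M ×ˢ S M, ∏ i, (1 + if pr.1 i = pr.2 i then (1/2:ℝ) else 0))
        ≤ ∑ pr ∈ S M ×ˢ S M, (1 + (if (∃ i, pr.1 i = pr.2 i) then (3/2:ℝ)^d else 0)) :=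
          Finset.sum_le_sum fun pr _ => hterm pr
      _ = (M:ℝ)^2 + (3/2)^d *
          (((S M ×ˢ S M).filter (fun pr => ∃ i, pr.1 i = pr.2 i)).card : ℝ) := by
          rw [Finset.sum_add_distrib, Finset.sum_const, nsmul_eq_mul, mul_one,
            ← Finset.sum_filter, Finset.sum_const, nsmul_eq_mul,
            Finset.card_product, hcard]
          push_cast
          ring
  -- the L² estimate
  have hg2 : ∀ M : ℕ, 1 ≤ M →
      (∫ x in Q, ((1 / (M : ℝ)) * (∑ k ∈ S M, u k x ^ 2) - 1 / L ^ d)^2)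
      ≤ (1/L^d) * (3/2)^d *
        ((((S M ×ˢ S M).filter (fun pr => ∃ i, pr.1 i = pr.2 i)).card : ℝ) / (M:ℝ)^2) := by
    intro M hM
    have hM0 : (0:ℝ) < M := by exact_mod_cast hM
    have hM0' : (M:ℝ) ≠ 0 := ne_of_gt hM0
    have expand : ∀ x : Fin d → ℝ,
        ((1 / (M : ℝ)) * (∑ k ∈ S M, u k x ^ 2) - 1 / L ^ d)^2
        = (1/(M:ℝ))^2 * (∑ k ∈ S M, u k x ^ 2)^2
          - (2/(L^d*M)) * (∑ k ∈ S M, u k x ^ 2) + (1/L^d)^2 := by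
      intro x
      field_simp
      ring
    have ia : IntegrableOn (fun x => (1/(M:ℝ))^2 * (∑ k ∈ S M, u k x ^ 2)^2) Q volume :=
      hint _ (continuous_const.mul ((hcF M).pow 2))
    have ib : IntegrableOn (fun x => (2/(L^d*(M:ℝ))) * (∑ k ∈ S M, u k x ^ 2)) Q volume :=
      hint _ (continuous_const.mul (hcF M))
    have iab : IntegrableOn (fun x => (1/(M:ℝ))^2 * (∑ k ∈ S M, u k x ^ 2)^2
        - (2/(L^d*(M:ℝ))) * (∑ k ∈ S M, u k x ^ 2)) Q volume :=
      hint _ ((continuous_const.mul ((hcF M).pow 2)).sub (continuous_const.mul (hcF M)))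
    have ic : IntegrableOn (fun _ : Fin d → ℝ => (1/L^d:ℝ)^2) Q volume :=
      integrableOn_const hQcomp.measure_lt_top.ne
    calc (∫ x in Q, ((1 / (M : ℝ)) * (∑ k ∈ S M, u k x ^ 2) - 1 / L ^ d)^2)
        = ∫ x in Q, ((1/(M:ℝ))^2 * (∑ k ∈ S M, u k x ^ 2)^2
            - (2/(L^d*M)) * (∑ k ∈ S M, u k x ^ 2) + (1/L^d)^2) := by
          simp_rw [expand]
      _ = (1/(M:ℝ))^2 * (∫ x in Q, (∑ k ∈ S M, u k x ^ 2)^2)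
            - (2/(L^d*M)) * (∫ x in Q, (∑ k ∈ S M, u k x ^ 2)) + (1/L^d)^2 * L^d := by
          rw [MeasureTheory.integral_add iab ic,
            MeasureTheory.integral_sub ia ib,
            MeasureTheory.integral_const_mul, MeasureTheory.integral_const_mul,
            setIntegral_const, measureReal_def, hQvol, smul_eq_mul]
          ring
      _ = (1/(M:ℝ))^2 * ((1/L)^d *
            (∑ pr ∈ S M ×ˢ S M, ∏ i, (1 + if pr.1 i = pr.2 i then (1/2:ℝ) else 0)))
            - (2/(L^d*M)) * M + (1/L^d)^2 * L^d := by
          rw [hIF2, hIF, ← Finset.mul_sum]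
      _ ≤ (1/(M:ℝ))^2 * ((1/L)^d * ((M:ℝ)^2 + (3/2)^d *
            (((S M ×ˢ S M).filter (fun pr => ∃ i, pr.1 i = pr.2 i)).card : ℝ)))
            - (2/(L^d*M)) * M + (1/L^d)^2 * L^d := by
          gcongr <;> first | exact hsum M | positivity
      _ = (1/L^d) * (3/2)^d *
            ((((S M ×ˢ S M).filter (fun pr => ∃ i, pr.1 i = pr.2 i)).card : ℝ) / (M:ℝ)^2) := by
          have hLd' : (L:ℝ)^d ≠ 0 := ne_of_gt hLd
          field_simp
          have hLL : (1/L)^d * L^d = 1 := by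
            rw [← mul_pow, one_div_mul_cancel (ne_of_gt hL), one_pow]
          linear_combination ((M:ℝ)^2 + (3/2)^d *
            (((S M ×ˢ S M).filter (fun pr => ∃ i, pr.1 i = pr.2 i)).card : ℝ)) * hLL
  -- convergence of the L² norms
  have hL2T : Tendsto (fun M : ℕ =>
      ∫ x in Q, ((1 / (M : ℝ)) * (∑ k ∈ S M, u k x ^ 2) - 1 / L ^ d)^2) atTop (nhds 0) := by
    apply squeeze_zero' (g := fun M => (1/L^d) * (3/2)^d *
      ((((S M ×ˢ S M).filter (fun pr => ∃ i, pr.1 i = pr.2 i)).card : ℝ) / (M:ℝ)^2))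
    · exact Eventually.of_forall fun M => setIntegral_nonneg hQmeas fun x _ => sq_nonneg _
    · filter_upwards [eventually_ge_atTop 1] with M hM
      exact hg2 M hM
    · have hc := (aux_count d hd S hpos hcard hminN).const_mul ((1/L^d) * (3/2:ℝ)^d)
      simpa using hc
  -- final ε-argument
  rw [Metric.tendsto_atTop]
  intro ε hε
  set η : ℝ := (ε/(2*L^d))^((1:ℝ)/p) with hηdef
  have hη : 0 < η := Real.rpow_pos_of_pos (by positivity) _
  have hηp : η ^ p = ε/(2*L^d) := by
    rw [hηdef, ← Real.rpow_mul (by positivity), one_div, inv_mul_cancel₀ (ne_of_gt hp0),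
      Real.rpow_one]
  have hCp : 0 < C ^ p := Real.rpow_pos_of_pos hCpos p
  have hδ : 0 < ε/2 * η^2 / C^p := by positivity
  obtain ⟨N, hN⟩ := (Metric.tendsto_atTop.1 hL2T) _ hδ
  refine ⟨max N 1, fun M hM => ?_⟩
  have hM1 : 1 ≤ M := le_trans (le_max_right N 1) hM
  have hMN : N ≤ M := le_trans (le_max_left N 1) hM
  have hI2 := hN M hMN
  rw [Real.dist_eq, sub_zero] at hI2 ⊢
  have hI2nn : 0 ≤ ∫ x in Q, ((1 / (M : ℝ)) * (∑ k ∈ S M, u k x ^ 2) - 1 / L ^ d)^2 :=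
    setIntegral_nonneg hQmeas fun x _ => sq_nonneg _
  rw [abs_of_nonneg hI2nn] at hI2
  have hIpnn : 0 ≤ ∫ x in Q, |(1 / (M : ℝ)) * (∑ k ∈ S M, u k x ^ 2) - 1 / L ^ d| ^ p :=
    setIntegral_nonneg hQmeas fun x _ => Real.rpow_nonneg (abs_nonneg _) p
  rw [abs_of_nonneg hIpnn]
  have hgcont : Continuous (fun x : Fin d → ℝ =>
      (1 / (M : ℝ)) * (∑ k ∈ S M, u k x ^ 2) - 1 / L ^ d) :=
    ((continuous_const.mul (hcF M)).sub continuous_const)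
  have iLHS : IntegrableOn (fun x : Fin d → ℝ =>
      |(1 / (M : ℝ)) * (∑ k ∈ S M, u k x ^ 2) - 1 / L ^ d| ^ p) Q volume :=
    hint _ (hgcont.abs.rpow_const fun x => Or.inr (le_of_lt hp0))
  have iRHS : IntegrableOn (fun x : Fin d → ℝ =>
      η^p + C^p/η^2 * ((1 / (M : ℝ)) * (∑ k ∈ S M, u k x ^ 2) - 1 / L ^ d)^(2:ℕ)) Q volume :=
    (integrableOn_const hQcomp.measure_lt_top.ne).add
      (hint _ (continuous_const.mul (hgcont.pow 2)))
  calc (∫ x in Q, |(1 / (M : ℝ)) * (∑ k ∈ S M, u k x ^ 2) - 1 / L ^ d| ^ p)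
      ≤ ∫ x in Q, (η^p + C^p/η^2 *
          ((1 / (M : ℝ)) * (∑ k ∈ S M, u k x ^ 2) - 1 / L ^ d)^(2:ℕ)) := by
        apply setIntegral_mono_on iLHS iRHS hQmeas
        intro x _
        have := aux_pt p (|(1 / (M : ℝ)) * (∑ k ∈ S M, u k x ^ 2) - 1 / L ^ d|) C η hp
          (abs_nonneg _) (hgb M hM1 x) hη
        rwa [sq_abs] at this
    _ = η^p * L^d + C^p/η^2 *
          ∫ x in Q, ((1 / (M : ℝ)) * (∑ k ∈ S M, u k x ^ 2) - 1 / L ^ d)^2 := by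
        rw [MeasureTheory.integral_add (integrableOn_const hQcomp.measure_lt_top.ne :
            IntegrableOn (fun _ : Fin d → ℝ => η^p) Q volume)
          (hint (fun x => C^p/η^2 * ((1 / (M : ℝ)) * (∑ k ∈ S M, u k x ^ 2) - 1 / L ^ d)^2)
            (continuous_const.mul (hgcont.pow 2))),
          MeasureTheory.integral_const_mul, setIntegral_const, measureReal_def, hQvol, smul_eq_mul]
        ring
    _ < ε := by
        have h1 : η^p * L^d = ε/2 := by
          rw [hηp]
          field_simp
        have h2 : C^p/η^2 * (∫ x in Q, ((1 / (M : ℝ)) * (∑ k ∈ S M, u k x ^ 2) - 1 / L ^ d)^2)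
            < C^p/η^2 * (ε/2*η^2/C^p) := by
          apply mul_lt_mul_of_pos_left hI2 (by positivity)
        have h3 : C^p/η^2 * (ε/2*η^2/C^p) = ε/2 := by
          field_simp
        linarith
end
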